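/- If 0 < x ≤ y < 1/2, then Φ̄^{−1}(x) − Φ̄^{−1}(y) ≤ (1/Φ̄^{−1}(y))·[ log(y/x) + 1/(Φ̄^{−1}(y))² ]. -/

import Mathlib

open Real MeasureTheory Set Filter

/-- Standard normal density. -/
noncomputable def gphi (t : ℝ) : ℝ := (Real.sqrt (2 * Real.pi))⁻¹ * Real.exp (-(t ^ 2) / 2)

/-- Standard normal upper-tail (survival) function. -/
noncomputable def Phibar (t : ℝ) : ℝ := ∫ s in Set.Ioi t, gphi s

/-- Inverse of the standard normal upper-tail function. -/
noncomputable def PhibarInv (x : ℝ) : ℝ := Function.invFun Phibar x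

lemma gphi_pos (t : ℝ) : 0 < gphi t := by
  have : 0 < Real.sqrt (2 * Real.pi) := Real.sqrt_pos.2 (by positivity)
  exact mul_pos (inv_pos.2 this) (Real.exp_pos _)

lemma gphi_eq (t : ℝ) : gphi t = (Real.sqrt (2 * Real.pi))⁻¹ * Real.exp (-(1/2) * t ^ 2) := by
  unfold gphi; ring_nf

lemma gphi_cont : Continuous gphi := by
  unfold gphi; fun_prop

lemma gphi_integrable : Integrable gphi := by
  have h := (integrable_exp_neg_mul_sq (by norm_num : (0:ℝ) < 1/2)).const_mul
    (Real.sqrt (2 * Real.pi))⁻¹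
  refine h.congr (Filter.Eventually.of_forall fun t => ?_)
  rw [gphi_eq]

lemma hasDerivAt_gphi (t : ℝ) : HasDerivAt gphi (-t * gphi t) t := by
  have h1 : HasDerivAt (fun s : ℝ => -(s ^ 2) / 2) (-t) t := by
    have := ((hasDerivAt_pow 2 t).neg.div_const 2)
    simpa using this.congr_deriv (by ring)
  have h2 := (h1.exp).const_mul (Real.sqrt (2 * Real.pi))⁻¹
  unfold gphi
  exact h2.congr_deriv (by ring)

lemma gphi_tendsto : Tendsto gphi atTop (nhds 0) := by
  have h : Tendsto (fun t : ℝ => -(t ^ 2) / 2) atTop atBot := by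
    apply Tendsto.atBot_div_const (by norm_num)
    exact tendsto_neg_atBot_iff.2 (tendsto_pow_atTop (by norm_num))
  have := (Real.tendsto_exp_atBot.comp h).const_mul (Real.sqrt (2 * Real.pi))⁻¹
  rw [mul_zero] at this; exact this

lemma Phibar_eq (t : ℝ) : Phibar t = Phibar 0 - ∫ s in (0:ℝ)..t, gphi s := by
  have hI : ∀ u : ℝ, Phibar u = (∫ s, gphi s) - ∫ s in Set.Iic u, gphi s := by
    intro u
    have := intervalIntegral.integral_Iic_add_Ioi (b := u) (f := gphi)
      gphi_integrable.integrableOn gphi_integrable.integrableOn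
    unfold Phibar; linarith
  rw [hI, hI 0, ← intervalIntegral.integral_Iic_sub_Iic (μ := volume) (a := (0:ℝ)) (b := t) gphi_integrable.integrableOn
    gphi_integrable.integrableOn]
  ring

lemma Phibar_hasDerivAt (t : ℝ) : HasDerivAt Phibar (-gphi t) t := by
  have h : HasDerivAt (fun u => ∫ s in (0:ℝ)..u, gphi s) (gphi t) t := by
    exact (intervalIntegral.integral_hasStrictDerivAt_right
      gphi_integrable.intervalIntegrable
      (gphi_cont.stronglyMeasurableAtFilter _ _)
      gphi_cont.continuousAt).hasDerivAt
  have := (h.const_sub (Phibar 0))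
  refine HasDerivAt.congr_of_eventuallyEq ?_ (Filter.Eventually.of_forall fun u => (Phibar_eq u))
  simpa using this

lemma Phibar_strictAnti : StrictAnti Phibar := by
  apply strictAnti_of_deriv_neg
  intro t
  rw [(Phibar_hasDerivAt t).deriv]
  simpa using gphi_pos t

lemma Phibar_zero : Phibar 0 = 1 / 2 := by
  unfold Phibar
  have h1 : ∀ s : ℝ, gphi s = (Real.sqrt (2 * Real.pi))⁻¹ * Real.exp (-(1/2) * s ^ 2) :=
    gphi_eq
  simp_rw [h1]
  rw [MeasureTheory.integral_const_mul, integral_gaussian_Ioi]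
  have h2 : Real.pi / (1/2) = 2 * Real.pi := by ring
  rw [h2]
  have h3 : Real.sqrt (2*Real.pi) ≠ 0 := ne_of_gt (Real.sqrt_pos.2 (by positivity))
  field_simp

lemma integral_mul_gphi (t : ℝ) : ∫ s in Set.Ioi t, s * gphi s = gphi t := by
  have hderiv : ∀ s ∈ Set.Ici t, HasDerivAt (fun u => -gphi u) (s * gphi s) s := by
    intro s _
    exact (hasDerivAt_gphi s).neg.congr_deriv (by ring)
  have hint : IntegrableOn (fun s => s * gphi s) (Set.Ioi t) := by
    have h := (integrable_mul_exp_neg_mul_sq (by norm_num : (0:ℝ) < 1/2)).const_mul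
      (Real.sqrt (2 * Real.pi))⁻¹
    refine (h.congr (Filter.Eventually.of_forall fun s => ?_)).integrableOn
    rw [gphi_eq]; ring
  have htend : Tendsto (fun u => -gphi u) atTop (nhds 0) := by
    simpa using gphi_tendsto.neg
  have := MeasureTheory.integral_Ioi_of_hasDerivAt_of_tendsto' hderiv hint htend
  simpa using this

lemma Phibar_le (t : ℝ) (ht : 0 < t) : Phibar t ≤ gphi t / t := by
  have hmono : ∀ s ∈ Set.Ioi t, gphi s ≤ (s / t) * gphi s := by
    intro s hs
    have h1 : (1:ℝ) ≤ s / t := (one_le_div ht).2 (le_of_lt hs)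
    nlinarith [gphi_pos s]
  have hint : IntegrableOn (fun s => (s/t) * gphi s) (Set.Ioi t) := by
    have h := (integrable_mul_exp_neg_mul_sq (by norm_num : (0:ℝ) < 1/2)).const_mul
      ((Real.sqrt (2 * Real.pi))⁻¹ * t⁻¹)
    refine (h.congr (Filter.Eventually.of_forall fun s => ?_)).integrableOn
    rw [gphi_eq]; ring
  have h2 : Phibar t ≤ ∫ s in Set.Ioi t, (s/t) * gphi s := by
    refine MeasureTheory.setIntegral_mono_on gphi_integrable.integrableOn hint
      measurableSet_Ioi hmono
  have h3 : ∫ s in Set.Ioi t, (s/t) * gphi s = gphi t / t := by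
    have : ∀ s : ℝ, (s/t) * gphi s = t⁻¹ * (s * gphi s) := by intro s; field_simp
    simp_rw [this]
    rw [MeasureTheory.integral_const_mul, integral_mul_gphi]
    rw [inv_mul_eq_div]
  linarith

lemma hasDerivAt_g (s : ℝ) :
    HasDerivAt (fun u => -((u / (u ^ 2 + 1)) * gphi u))
      (gphi s * (1 - 2 / (s ^ 2 + 1) ^ 2)) s := by
  have hne : s ^ 2 + 1 ≠ 0 := by positivity
  have h1 : HasDerivAt (fun u : ℝ => u / (u ^ 2 + 1))
      ((1 * (s ^ 2 + 1) - s * (2 * s)) / (s ^ 2 + 1) ^ 2) s := by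
    have := (hasDerivAt_id s).div (((hasDerivAt_pow 2 s)).add_const 1) hne
    exact this.congr_deriv (by norm_num)
  have h2 := (h1.mul (hasDerivAt_gphi s)).neg
  refine h2.congr_deriv ?_
  field_simp
  ring

lemma Phibar_ge (t : ℝ) (ht : 0 ≤ t) : (t / (t ^ 2 + 1)) * gphi t ≤ Phibar t := by
  set g : ℝ → ℝ := fun u => -((u / (u ^ 2 + 1)) * gphi u) with hg
  have hderiv : ∀ s ∈ Set.Ici t, HasDerivAt g (gphi s * (1 - 2 / (s ^ 2 + 1) ^ 2)) s :=
    fun s _ => hasDerivAt_g s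
  have habs : ∀ s : ℝ, |gphi s * (1 - 2 / (s ^ 2 + 1) ^ 2)| ≤ gphi s := by
    intro s
    rw [abs_mul, abs_of_pos (gphi_pos s)]
    have h1 : (0:ℝ) < (s ^ 2 + 1) ^ 2 := by positivity
    have h2 : (1:ℝ) ≤ (s ^ 2 + 1) ^ 2 := by nlinarith
    have : |1 - 2 / (s ^ 2 + 1) ^ 2| ≤ 1 := by
      rw [abs_le]
      constructor
      · have : 2 / (s ^ 2 + 1) ^ 2 ≤ 2 := by
          rw [div_le_iff₀ h1]; nlinarith
        linarith
      · have : 0 < 2 / (s ^ 2 + 1) ^ 2 := by positivity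
        linarith
    nlinarith [gphi_pos s]
  have hint : IntegrableOn (fun s => gphi s * (1 - 2 / (s ^ 2 + 1) ^ 2)) (Set.Ioi t) := by
    refine (gphi_integrable.mono ?_ (Filter.Eventually.of_forall fun s => ?_)).integrableOn
    · refine (gphi_cont.mul (continuous_const.sub (continuous_const.div
        (by fun_prop) fun x => by positivity))).aestronglyMeasurable
    · rw [Real.norm_eq_abs, Real.norm_eq_abs, abs_of_pos (gphi_pos s)]
      exact habs s
  have htend : Tendsto g atTop (nhds 0) := by
    apply squeeze_zero_norm ?_ gphi_tendsto
    intro s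
    rw [hg]
    simp only [norm_neg, norm_mul, Real.norm_eq_abs]
    calc |s / (s ^ 2 + 1)| * |gphi s| ≤ 1 * |gphi s| := by
          apply mul_le_mul_of_nonneg_right _ (abs_nonneg _)
          rw [abs_div, abs_of_pos (by positivity : (0:ℝ) < s ^ 2 + 1), div_le_one (by positivity)]
          nlinarith [abs_nonneg s, sq_abs s]
      _ = |gphi s| := one_mul _
      _ = gphi s := abs_of_pos (gphi_pos s)
  have hFTC := MeasureTheory.integral_Ioi_of_hasDerivAt_of_tendsto' hderiv hint htend
  have hmono : (∫ s in Set.Ioi t, gphi s * (1 - 2 / (s ^ 2 + 1) ^ 2)) ≤ Phibar t := by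
    refine MeasureTheory.setIntegral_mono_on hint gphi_integrable.integrableOn
      measurableSet_Ioi fun s _ => ?_
    have := habs s
    have := abs_le.1 this
    linarith [(abs_le.1 (habs s)).2, le_abs_self (gphi s * (1 - 2 / (s ^ 2 + 1) ^ 2))]
  rw [hFTC] at hmono
  have : g t = -((t / (t ^ 2 + 1)) * gphi t) := rfl
  rw [this] at hmono
  linarith

lemma Phibar_pos (t : ℝ) : 0 < Phibar t := by
  have h := Phibar_ge (max t 1) (by positivity)
  have h1 : Phibar (max t 1) ≤ Phibar t := Phibar_strictAnti.antitone (le_max_left t 1)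
  have hmax : (0:ℝ) < max t 1 := lt_of_lt_of_le one_pos (le_max_right t 1)
  have h2 : 0 < (max t 1 / ((max t 1) ^ 2 + 1)) * gphi (max t 1) :=
    mul_pos (div_pos hmax (by positivity)) (gphi_pos _)
  linarith

lemma Phibar_tendsto_atTop : Tendsto Phibar atTop (nhds 0) := by
  apply squeeze_zero_norm' ?_ (by simpa using gphi_tendsto)
  filter_upwards [Filter.eventually_ge_atTop (1:ℝ)] with t ht
  rw [Real.norm_eq_abs, abs_of_pos (Phibar_pos t)]
  calc Phibar t ≤ gphi t / t := Phibar_le t (by linarith)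
    _ ≤ gphi t / 1 := by
        apply div_le_div_of_nonneg_left (le_of_lt (gphi_pos t)) one_pos ht
    _ = gphi t := by rw [div_one]

lemma Phibar_cont : Continuous Phibar :=
  continuous_iff_continuousAt.2 fun t => (Phibar_hasDerivAt t).continuousAt

lemma Phibar_surj (x : ℝ) (hx0 : 0 < x) (hx : x ≤ 1 / 2) : ∃ t, 0 ≤ t ∧ Phibar t = x := by
  obtain ⟨T, hT⟩ := (Phibar_tendsto_atTop.eventually (gt_mem_nhds hx0)).exists
  set T' := max T 0 with hT'
  have hT'0 : (0:ℝ) ≤ T' := le_max_right T 0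
  have hPT' : Phibar T' < x := lt_of_le_of_lt (Phibar_strictAnti.antitone (le_max_left T 0)) hT
  have hmem : x ∈ Set.Icc (Phibar T') (Phibar 0) := ⟨le_of_lt hPT', by rw [Phibar_zero]; exact hx⟩
  have := intermediate_value_Icc' hT'0 Phibar_cont.continuousOn hmem
  obtain ⟨c, hc, hcx⟩ := this
  exact ⟨c, hc.1, hcx⟩


theorem quantile_diff_upper_log (x y : ℝ) (hx0 : 0 < x) (hxy : x ≤ y) (hy : y < 1 / 2) :
    PhibarInv x - PhibarInv y ≤
      (1 / PhibarInv y) * (Real.log (y / x) + 1 / (PhibarInv y) ^ 2) := by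
  have hy0 : 0 < y := lt_of_lt_of_le hx0 hxy
  obtain ⟨a, ha0, ha⟩ := Phibar_surj y hy0 (le_of_lt hy)
  obtain ⟨b, hb0', hb⟩ := Phibar_surj x hx0 (le_of_lt (lt_of_le_of_lt hxy hy))
  have hinj := Phibar_strictAnti.injective
  have hIa : PhibarInv y = a := by
    rw [PhibarInv, ← ha]; exact Function.leftInverse_invFun hinj a
  have hIb : PhibarInv x = b := by
    rw [PhibarInv, ← hb]; exact Function.leftInverse_invFun hinj b
  rw [hIa, hIb]
  -- a > 0
  have ha_pos : 0 < a := by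
    have : Phibar a < Phibar 0 := by rw [ha, Phibar_zero]; exact hy
    exact Phibar_strictAnti.lt_iff_gt.1 this
  -- a ≤ b
  have hab : a ≤ b := by
    have : Phibar b ≤ Phibar a := by rw [ha, hb]; exact hxy
    exact Phibar_strictAnti.le_iff_ge.1 this
  have hb_pos : 0 < b := lt_of_lt_of_le ha_pos hab
  -- tail bounds
  have hyl : (a / (a ^ 2 + 1)) * gphi a ≤ y := by rw [← ha]; exact Phibar_ge a ha_pos.le
  have hxu : x ≤ gphi b / b := by rw [← hb]; exact Phibar_le b hb_pos
  have hgb_pos := gphi_pos b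
  have hga_pos := gphi_pos a
  have hNpos : 0 < (a / (a ^ 2 + 1)) * gphi a :=
    mul_pos (div_pos ha_pos (by positivity)) hga_pos
  have hDpos : 0 < gphi b / b := div_pos hgb_pos hb_pos
  -- ratio bound
  have hratio : ((a / (a ^ 2 + 1)) * gphi a) / (gphi b / b) ≤ y / x :=
    div_le_div₀ hy0.le hyl hx0 hxu
  -- compute that ratio
  have hexp : gphi a = gphi b * Real.exp ((b ^ 2 - a ^ 2) / 2) := by
    unfold gphi
    rw [mul_assoc, ← Real.exp_add]
    congr 1
    ring
  have hratio_eq : ((a / (a ^ 2 + 1)) * gphi a) / (gphi b / b)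
      = (a * b / (a ^ 2 + 1)) * Real.exp ((b ^ 2 - a ^ 2) / 2) := by
    rw [hexp]
    field_simp
  have hlog1 : Real.log (((a / (a ^ 2 + 1)) * gphi a) / (gphi b / b)) ≤ Real.log (y / x) :=
    Real.log_le_log (by positivity) hratio
  rw [hratio_eq, Real.log_mul (by positivity) (Real.exp_ne_zero _), Real.log_exp] at hlog1
  -- lower bound log(ab/(a²+1)) ≥ -1/a²
  have hA : -(1 / a ^ 2) ≤ Real.log (a * b / (a ^ 2 + 1)) := by
    have h1 : a ^ 2 / (a ^ 2 + 1) ≤ a * b / (a ^ 2 + 1) := by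
      apply div_le_div_of_nonneg_right ?_ (by positivity)  -- maybe wrong name
      nlinarith
    have h2 : Real.log (a ^ 2 / (a ^ 2 + 1)) ≤ Real.log (a * b / (a ^ 2 + 1)) :=
      Real.log_le_log (by positivity) h1
    have h3 : Real.log (a ^ 2 / (a ^ 2 + 1)) = - Real.log ((a ^ 2 + 1) / a ^ 2) := by
      rw [← Real.log_inv]
      congr 1
      field_simp
    have h4 : Real.log ((a ^ 2 + 1) / a ^ 2) ≤ 1 / a ^ 2 := by
      have h5 : (a ^ 2 + 1) / a ^ 2 = 1 + 1 / a ^ 2 := by field_simp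
      have h6 := Real.log_le_sub_one_of_pos (show (0:ℝ) < (a ^ 2 + 1) / a ^ 2 by positivity)
      rw [h5] at h6 ⊢
      linarith
    linarith
  -- (b²-a²)/2 ≥ a(b-a)
  have hB : a * (b - a) ≤ (b ^ 2 - a ^ 2) / 2 := by nlinarith
  have hkey : a * (b - a) ≤ Real.log (y / x) + 1 / a ^ 2 := by linarith
  rw [one_div, inv_mul_eq_div, le_div_iff₀ ha_pos]
  nlinarith
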